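/- Let $p$ be a prime and $n \geq 1$ a natural number. Then the $p$-adic valuation of the multinomial coefficient $(np)!/(n!)^p$ equals the sum of the base-$p$ digits of $n$; in particular $p$ divides $(np)!/(n!)^p$. -/

import Mathlib

theorem aux_arith (s n p : ℕ) (hsle : s ≤ n) (hp : 1 ≤ p) :
    n * p - s = p * (n - s) + (p - 1) * s := by
  obtain ⟨m, rfl⟩ := Nat.exists_eq_add_of_le hsle
  obtain ⟨q, rfl⟩ : ∃ q, p = q + 1 := ⟨p - 1, by omega⟩
  simp only [Nat.add_sub_cancel_left, Nat.add_sub_cancel]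
  have e1 : (s + m) * (q + 1) = s + ((q + 1) * m + q * s) := by ring
  omega

theorem padicValNat_central_multinomial (p n : ℕ) (hp : p.Prime) (hn : 1 ≤ n) :
    padicValNat p ((n * p).factorial / n.factorial ^ p) = (Nat.digits p n).sum ∧
      p ∣ (n * p).factorial / n.factorial ^ p := by
  haveI : Fact p.Prime := ⟨hp⟩
  have hdvd : n.factorial ^ p ∣ (n * p).factorial := by
    have := Nat.prod_factorial_dvd_factorial_sum (Finset.range p) (fun _ => n)
    simpa [Finset.prod_const, Finset.sum_const, mul_comm] using this
  set s := (Nat.digits p n).sum with hs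
  have hsle : s ≤ n := Nat.digit_sum_le p n
  -- digits of n*p
  have hdig : Nat.digits p (n * p) = 0 :: Nat.digits p n := by
    rw [Nat.digits_def' hp.one_lt (Nat.mul_pos (by omega) hp.pos)]
    rw [Nat.mul_mod_left, Nat.mul_div_cancel _ hp.pos]
  have h1 : (p - 1) * padicValNat p (n * p).factorial = n * p - s := by
    rw [sub_one_mul_padicValNat_factorial, hdig]; simp [hs]
  have h2 : (p - 1) * padicValNat p n.factorial = n - s :=
    sub_one_mul_padicValNat_factorial n
  have key : padicValNat p (n * p).factorial = p * padicValNat p n.factorial + s := by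
    have hcancel : (p - 1) * padicValNat p (n * p).factorial
        = (p - 1) * (p * padicValNat p n.factorial + s) := by
      rw [h1, Nat.mul_add, show (p - 1) * (p * padicValNat p n.factorial)
            = p * ((p - 1) * padicValNat p n.factorial) by ring, h2]
      exact aux_arith s n p hsle hp.pos
    exact Nat.eq_of_mul_eq_mul_left (by have := hp.two_le; omega) hcancel
  have hval : padicValNat p ((n * p).factorial / n.factorial ^ p) = s := by
    rw [padicValNat.div_of_dvd hdvd, padicValNat.pow n.factorial p, key]
    omega
  have hspos : 1 ≤ s := by
    have hne : Nat.digits p n ≠ [] := Nat.digits_ne_nil_iff_ne_zero.mpr (by omega)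
    have hlast := Nat.getLast_digit_ne_zero p (by omega : n ≠ 0)
    have hmem : (Nat.digits p n).getLast hne ∈ Nat.digits p n := List.getLast_mem hne
    calc 1 ≤ (Nat.digits p n).getLast hne := by omega
    _ ≤ s := List.single_le_sum (fun x _ => Nat.zero_le x) _ hmem
  refine ⟨hval, ?_⟩
  have hne : (n * p).factorial / n.factorial ^ p ≠ 0 := by
    have := Nat.div_pos (Nat.le_of_dvd (Nat.factorial_pos _) hdvd) (by positivity)
    omega
  have := pow_padicValNat_dvd (p := p) (n := (n * p).factorial / n.factorial ^ p)
  rw [hval] at this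
  exact dvd_trans (dvd_pow_self p (by omega)) this
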